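/- Pathwise convexity of the optimal firm-supply cost: for every fixed s ∈ ℝ₊^N, the function x ↦ Σ_{k=1}^N max{0, −ξ_k(x, s)} is convex on the nonnegative orthant ℝ₊^N. -/

import Mathlib

/-- The residual process: `ξ_0 = 0`, `ξ_{k+1} = max{0, ξ_k} + s_k - x_{k+1}`. -/
noncomputable def resid (x s : ℕ → ℝ) : ℕ → ℝ
  | 0 => 0
  | k + 1 => max 0 (resid x s k) + s k - x (k + 1)

private lemma max_neg_helper (a : ℝ) : max 0 a = a + max 0 (-a) := by
  rcases le_total a 0 with h | h
  · rw [max_eq_left h, max_eq_right (neg_nonneg.mpr h)]; ring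
  · rw [max_eq_right h, max_eq_left (neg_nonpos.mpr h)]; ring

private lemma cost_eq (x s : ℕ → ℝ) (n : ℕ) :
    ∑ k ∈ Finset.Icc 1 n, max 0 (-(resid x s k)) =
      resid x s (n + 1) - (∑ k ∈ Finset.range (n + 1), s k)
        + ∑ k ∈ Finset.Icc 1 (n + 1), x k := by
  induction n with
  | zero => simp [resid]
  | succ n ih =>
    rw [Finset.sum_Icc_succ_top (by omega : 1 ≤ n + 1), ih,
      Finset.sum_Icc_succ_top (by omega : 1 ≤ n + 2)]
    simp only [Finset.sum_range_succ]
    have hr : resid x s (n + 2) = max 0 (resid x s (n + 1)) + s (n + 1) - x (n + 2) := rfl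
    have h := max_neg_helper (resid x s (n + 1))
    rw [hr]
    linarith

private lemma resid_convex (s : ℕ → ℝ) (S : Set (ℕ → ℝ)) (hS : Convex ℝ S) (n : ℕ) :
    ConvexOn ℝ S (fun x => resid x s n) := by
  induction n with
  | zero =>
    have : (fun x : ℕ → ℝ => resid x s 0) = fun _ => (0 : ℝ) := rfl
    rw [this]; exact convexOn_const 0 hS
  | succ n ih =>
    have h1 : ConvexOn ℝ S (fun x => max 0 (resid x s n)) := (convexOn_const 0 hS).sup ih
    have h2 : ConvexOn ℝ S (fun x : ℕ → ℝ => s n - x (n + 1)) := by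
      refine ⟨hS, fun x _ y _ a b ha hb hab => le_of_eq ?_⟩
      simp only [Pi.add_apply, Pi.smul_apply, smul_eq_mul]
      linear_combination (-(s n)) * hab
    have := h1.add h2
    have key : (fun x => resid x s (n + 1))
        = ((fun x => max 0 (resid x s n)) + fun x : ℕ → ℝ => s n - x (n + 1)) := by
      funext x
      show resid x s (n + 1) = _
      simp [resid]
      ring
    rw [key]; exact this

theorem optimal_firm_cost_convexOn
    (N : ℕ) (hN : 1 ≤ N) (s : ℕ → ℝ) (hs : ∀ k, k < N → 0 ≤ s k) :
    ConvexOn ℝ {x : ℕ → ℝ | ∀ j, 1 ≤ j → j ≤ N → 0 ≤ x j}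
      (fun x => ∑ k ∈ Finset.Icc 1 N, max 0 (-(resid x s k))) := by
  set S : Set (ℕ → ℝ) := {x : ℕ → ℝ | ∀ j, 1 ≤ j → j ≤ N → 0 ≤ x j} with hSdef
  have hS : Convex ℝ S := by
    intro x hx y hy a b ha hb hab
    intro j hj1 hj2
    have := hx j hj1 hj2
    have := hy j hj1 hj2
    simp only [Pi.add_apply, Pi.smul_apply, smul_eq_mul]
    positivity
  have hrw : (fun x : ℕ → ℝ => ∑ k ∈ Finset.Icc 1 N, max 0 (-(resid x s k)))
      = fun x => resid x s (N + 1)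
        + (∑ k ∈ Finset.Icc 1 (N + 1), x k - ∑ k ∈ Finset.range (N + 1), s k) := by
    funext x
    rw [cost_eq x s N]
    ring
  rw [hrw]
  have h1 : ConvexOn ℝ S (fun x => resid x s (N + 1)) := resid_convex s S hS _
  have h2 : ConvexOn ℝ S
      (fun x : ℕ → ℝ => ∑ k ∈ Finset.Icc 1 (N + 1), x k - ∑ k ∈ Finset.range (N + 1), s k) := by
    refine ⟨hS, fun x _ y _ a b ha hb hab => le_of_eq ?_⟩
    simp only [Pi.add_apply, Pi.smul_apply, smul_eq_mul, Finset.sum_add_distrib,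
      ← Finset.mul_sum]
    linear_combination (∑ k ∈ Finset.range (N + 1), s k) * hab
  exact h1.add h2
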